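/- In the setting of the T-procedure (F unital C*-algebra, C = C* first class, D = [F C] ∩ [C F], O = M_F(D)), one has D = [O C] = [C O], i.e. D is the closed linear span of products of observables with constraints. -/

import Mathlib

open Polynomial in
lemma aux_aeval_mem {A : Type*} [CStarAlgebra A]
    (S : NonUnitalStarSubalgebra ℂ A) (h : A) (hh : h ∈ S) (q : ℝ[X]) (hq : q.coeff 0 = 0) :
    aeval h q ∈ S := by
  have hpow : ∀ n : ℕ, h ^ (n + 1) ∈ S := by
    intro n
    induction n with
    | zero => simpa using hh
    | succ k ih => rw [pow_succ]; exact mul_mem ih hh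
  have hsmul : ∀ (r : ℝ) (x : A), x ∈ S → r • x ∈ S := by
    intro r x hx
    have : r • x = (r : ℂ) • x := by
      rw [← IsScalarTower.algebraMap_smul ℂ r x]
      norm_num
    rw [this]
    exact SMulMemClass.smul_mem _ hx
  obtain ⟨r, rfl⟩ := Polynomial.X_dvd_iff.mpr hq
  have : ∀ r : ℝ[X], aeval h (X * r) ∈ S := by
    intro r
    induction r using Polynomial.induction_on' with
    | add p q hp hq => rw [mul_add, map_add]; exact add_mem hp hq
    | monomial n a =>
        have : aeval h (X * monomial n a) = a • h ^ (n + 1) := by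
          rw [aeval_mul, aeval_X, aeval_monomial, Algebra.smul_def, pow_succ',
            ← mul_assoc, ← Algebra.commutes, mul_assoc]
        rw [this]
        exact hsmul _ _ (hpow n)
  exact this r

open Polynomial in
lemma aux_cfc_mem {A : Type*} [CStarAlgebra A]
    (S : NonUnitalStarSubalgebra ℂ A) (h : A) (hh : h ∈ S) (hsa : IsSelfAdjoint h)
    (g : ℝ → ℝ) (hg : Continuous g) (hg0 : g 0 = 0) :
    cfc g h ∈ closure (S : Set A) := by
  rcases subsingleton_or_nontrivial A with hsub | hnt
  · exact subset_closure (by simpa using (Subsingleton.elim (cfc g h) 0) ▸ S.zero_mem)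
  rw [Metric.mem_closure_iff]
  intro ε hε
  obtain ⟨p, hp⟩ := exists_polynomial_near_of_continuousOn (-‖h‖) ‖h‖ g hg.continuousOn
    (ε/3) (by positivity)
  set q : ℝ[X] := p - C (p.eval 0) with hqdef
  have hq0 : q.coeff 0 = 0 := by
    simp [hqdef, coeff_sub, ← Polynomial.coeff_zero_eq_eval_zero]
  refine ⟨aeval h q, aux_aeval_mem S h hh q hq0, ?_⟩
  have h0mem : (0:ℝ) ∈ Set.Icc (-‖h‖) ‖h‖ := by
    constructor <;> simp [norm_nonneg]
  have hspec : spectrum ℝ h ⊆ Set.Icc (-‖h‖) ‖h‖ := by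
    intro t ht
    have := spectrum.norm_le_norm_of_mem ht
    rw [Real.norm_eq_abs] at this
    exact abs_le.mp this
  have key : ∀ t ∈ spectrum ℝ h, ‖g t - q.eval t‖ ≤ 2*ε/3 := by
    intro t ht
    have h1 := hp t (hspec ht)
    have h2 := hp 0 h0mem
    rw [hg0] at h2
    have : q.eval t = p.eval t - p.eval 0 := by simp [hqdef]
    rw [this, Real.norm_eq_abs]
    have : g t - (p.eval t - p.eval 0) = (g t - p.eval t) + p.eval 0 := by ring
    rw [this]
    have h1' : |g t - p.eval t| ≤ ε/3 := by rw [abs_sub_comm]; exact h1.le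
    have h2' : |p.eval 0| ≤ ε/3 := by simpa using h2.le
    calc |(g t - p.eval t) + p.eval 0| ≤ |g t - p.eval t| + |p.eval 0| := abs_add_le _ _
      _ ≤ ε/3 + ε/3 := add_le_add h1' h2'
      _ = 2*ε/3 := by ring
  have : dist (cfc g h) (aeval h q) = ‖cfc (fun t => g t - q.eval t) h‖ := by
    rw [dist_eq_norm, ← cfc_polynomial q h,
      cfc_sub g (fun t => q.eval t) h hg.continuousOn (q.continuous).continuousOn]
  rw [this]
  calc ‖cfc (fun t => g t - q.eval t) h‖ ≤ 2*ε/3 := norm_cfc_le (by positivity) key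
    _ < ε := by linarith

lemma aux_unit {A : Type*} [CStarAlgebra A] [PartialOrder A] [StarOrderedRing A]
    {n : ℕ} (c : Fin n → A) {ε : ℝ} (hε : 0 < ε) :
    ∃ u : A, ‖u‖ ≤ 1 ∧ (∀ i, ‖c i - c i * u‖ ≤ ε) ∧
      ∀ (S : NonUnitalStarSubalgebra ℂ A), (∀ i, c i ∈ S) → u ∈ closure (S : Set A) := by
  set δ : ℝ := ε ^ 2 with hδdef
  have hδ : 0 < δ := by positivity
  set f : ℝ → ℝ := fun t => max 0 (1 - t / δ) with hfdef
  have hfc : Continuous f := by fun_prop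
  set g : ℝ → ℝ := fun t => 1 - f t with hgdef
  have hgc : Continuous g := by fun_prop
  have hg0 : g 0 = 0 := by simp [hgdef, hfdef]
  set h : A := ∑ i, star (c i) * c i with hhdef
  have hh0 : 0 ≤ h := Finset.sum_nonneg fun i _ => star_mul_self_nonneg (c i)
  have hsa : IsSelfAdjoint h := .of_nonneg hh0
  have hspec : ∀ t ∈ spectrum ℝ h, 0 ≤ t := fun t ht => spectrum_nonneg_of_nonneg hh0 ht
  have hf01 : ∀ t ∈ spectrum ℝ h, 0 ≤ f t ∧ f t ≤ 1 := by
    intro t ht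
    refine ⟨le_max_left _ _, ?_⟩
    have h1 : 0 ≤ t / δ := div_nonneg (hspec t ht) hδ.le
    simp only [hfdef, max_le_iff]
    constructor <;> linarith
  refine ⟨cfc g h, ?_, ?_, ?_⟩
  · refine norm_cfc_le zero_le_one fun t ht => ?_
    obtain ⟨h1, h2⟩ := hf01 t ht
    rw [Real.norm_eq_abs, hgdef]
    rw [abs_le]
    constructor <;> simp only [hgdef] <;> linarith
  · -- the estimate
    intro i
    set u : A := cfc g h with hudef
    set w : A := cfc f h with hwdef
    have hw1u : w = 1 - u := by
      have : f = fun t => (fun _ => (1:ℝ)) t - g t := by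
        funext t; simp [hgdef]
      rw [hwdef, this, cfc_sub (fun _ => (1:ℝ)) g h (by fun_prop) hgc.continuousOn,
        cfc_const_one ℝ h]
    have hcw : c i - c i * u = c i * w := by rw [hw1u, mul_sub, mul_one]
    have hwsa : IsSelfAdjoint w := cfc_predicate f h
    have key : ‖c i * w‖ * ‖c i * w‖ ≤ δ := by
      have e1 : ‖c i * w‖ * ‖c i * w‖ = ‖w * (star (c i) * c i) * w‖ := by
        rw [← CStarRing.norm_star_mul_self, star_mul, hwsa.star_eq]
        congr 1
        simp [mul_assoc]
      have hle : star (c i) * c i ≤ h := by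
        rw [hhdef]
        exact Finset.single_le_sum (f := fun j => star (c j) * c j)
          (fun j _ => star_mul_self_nonneg (c j)) (Finset.mem_univ i)
      have hconj : w * (star (c i) * c i) * w ≤ w * h * w :=
        hwsa.conjugate_le_conjugate hle
      have hcnn : 0 ≤ w * (star (c i) * c i) * w := by
        have := star_left_conjugate_nonneg (star_mul_self_nonneg (c i)) w
        rwa [hwsa.star_eq] at this
      have e2 : ‖w * (star (c i) * c i) * w‖ ≤ ‖w * h * w‖ :=
        CStarAlgebra.norm_le_norm_of_nonneg_of_le hcnn hconj
      have e3 : cfc (fun t => f t * t * f t) h = w * h * w := by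
        rw [cfc_mul (fun t => f t * t) f h ((hfc.mul continuous_id).continuousOn)
            hfc.continuousOn,
          cfc_mul f (fun t => t) h hfc.continuousOn (by fun_prop), cfc_id' ℝ h hsa]
      have e4 : ‖w * h * w‖ ≤ δ := by
        rw [← e3]
        refine norm_cfc_le hδ.le fun t ht => ?_
        obtain ⟨h1, h2⟩ := hf01 t ht
        have h0 := hspec t ht
        rw [Real.norm_eq_abs, abs_le]
        constructor
        · nlinarith [mul_nonneg (mul_nonneg h1 h0) h1]
        · rcases le_or_gt t δ with hc | hc
          · nlinarith [mul_nonneg (sub_nonneg.mpr h2) h0,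
              mul_nonneg (sub_nonneg.mpr h2) (mul_nonneg h1 h0), mul_nonneg h1 h0]
          · have hft : f t = 0 := by
              simp only [hfdef, max_eq_left_iff]
              rw [sub_nonpos, le_div_iff₀ hδ]
              linarith
            rw [hft]
            nlinarith
      rw [e1]
      exact e2.trans e4
    rw [hcw]
    nlinarith [norm_nonneg (c i * w), key]
  · intro S hS
    have hhS : h ∈ S := by
      rw [hhdef]
      exact sum_mem fun i _ => mul_mem (star_mem (hS i)) (hS i)
    exact aux_cfc_mem S h hhS hsa g hgc hg0


/-- T-procedure: for a first-class self-adjoint constraint set `C` (i.e. `1 ∉ C*(C)`)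
in a unital C*-algebra `F`, with `D = [F C] ∩ [C F]` and `O = M_F(D)`, one has
`D = [O C] = [C O]`. -/
theorem stmt_7 {F : Type*} [NormedRing F] [StarRing F] [CStarRing F]
    [NormedAlgebra ℂ F] [StarModule ℂ F] [CompleteSpace F]
    (C : Set F) (hC : ∀ c ∈ C, star c ∈ C)
    (hfc : (1 : F) ∉ closure ((NonUnitalStarAlgebra.adjoin ℂ C : NonUnitalStarSubalgebra ℂ F) : Set F)) :
    let N₁ : Set F := closure ((Submodule.span ℂ {x : F | ∃ a : F, ∃ c ∈ C, x = a * c} : Submodule ℂ F) : Set F)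
    let N₂ : Set F := closure ((Submodule.span ℂ {x : F | ∃ a : F, ∃ c ∈ C, x = c * a} : Submodule ℂ F) : Set F)
    let D : Set F := N₁ ∩ N₂
    let O : Set F := {A : F | ∀ d ∈ D, A * d ∈ D ∧ d * A ∈ D}
    D = closure ((Submodule.span ℂ {x : F | ∃ a ∈ O, ∃ c ∈ C, x = a * c} : Submodule ℂ F) : Set F) ∧
    D = closure ((Submodule.span ℂ {x : F | ∃ a ∈ O, ∃ c ∈ C, x = c * a} : Submodule ℂ F) : Set F) := by
  letI : CStarAlgebra F := {}
  letI : PartialOrder F := CStarAlgebra.spectralOrder F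
  haveI : StarOrderedRing F := CStarAlgebra.spectralOrderedRing F
  intro N₁ N₂ D O
  set M₁ : Submodule ℂ F := Submodule.span ℂ {x : F | ∃ a : F, ∃ c ∈ C, x = a * c}
    with hM₁def
  set M₂ : Submodule ℂ F := Submodule.span ℂ {x : F | ∃ a : F, ∃ c ∈ C, x = c * a}
    with hM₂def
  have hN₁ : N₁ = closure (M₁ : Set F) := rfl
  have hN₂ : N₂ = closure (M₂ : Set F) := rfl
  -- M₁ is a left ideal, M₂ a right ideal (at the span level)
  have hmemM₁ : ∀ (a : F), ∀ x ∈ M₁, a * x ∈ M₁ := by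
    intro a x hx
    induction hx using Submodule.span_induction with
    | mem y hy =>
        obtain ⟨b, c, hc, rfl⟩ := hy
        exact Submodule.subset_span ⟨a * b, c, hc, (mul_assoc a b c).symm⟩
    | zero => rw [mul_zero]; exact M₁.zero_mem
    | add y z _ _ hy hz => rw [mul_add]; exact add_mem hy hz
    | smul r y _ hy => rw [mul_smul_comm]; exact SMulMemClass.smul_mem r hy
  have hmemM₂ : ∀ (a : F), ∀ x ∈ M₂, x * a ∈ M₂ := by
    intro a x hx
    induction hx using Submodule.span_induction with
    | mem y hy =>
        obtain ⟨b, c, hc, rfl⟩ := hy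
        exact Submodule.subset_span ⟨b * a, c, hc, mul_assoc c b a⟩
    | zero => rw [zero_mul]; exact M₂.zero_mem
    | add y z _ _ hy hz => rw [add_mul]; exact add_mem hy hz
    | smul r y _ hy => rw [smul_mul_assoc]; exact SMulMemClass.smul_mem r hy
  have hleft : ∀ (a : F), ∀ x ∈ N₁, a * x ∈ N₁ := by
    intro a x hx
    rw [hN₁] at hx ⊢
    exact map_mem_closure (continuous_mul_left a) hx (fun y hy => hmemM₁ a y hy)
  have hright : ∀ (a : F), ∀ x ∈ N₂, x * a ∈ N₂ := by
    intro a x hx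
    rw [hN₂] at hx ⊢
    exact map_mem_closure (f := fun b => b * a) (continuous_mul_right a) hx (fun y hy => hmemM₂ a y hy)
  -- star swaps the two ideals
  have hstarM₁ : ∀ x ∈ M₁, star x ∈ M₂ := by
    intro x hx
    induction hx using Submodule.span_induction with
    | mem y hy =>
        obtain ⟨a, c, hc, rfl⟩ := hy
        exact Submodule.subset_span ⟨star a, star c, hC c hc, by rw [star_mul]⟩
    | zero => rw [star_zero]; exact M₂.zero_mem
    | add y z _ _ hy hz => rw [star_add]; exact add_mem hy hz
    | smul r y _ hy => rw [star_smul]; exact SMulMemClass.smul_mem _ hy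
  have hstarM₂ : ∀ x ∈ M₂, star x ∈ M₁ := by
    intro x hx
    induction hx using Submodule.span_induction with
    | mem y hy =>
        obtain ⟨a, c, hc, rfl⟩ := hy
        exact Submodule.subset_span ⟨star a, star c, hC c hc, by rw [star_mul]⟩
    | zero => rw [star_zero]; exact M₁.zero_mem
    | add y z _ _ hy hz => rw [star_add]; exact add_mem hy hz
    | smul r y _ hy => rw [star_smul]; exact SMulMemClass.smul_mem _ hy
  have hstarN₁ : ∀ x ∈ N₁, star x ∈ N₂ := by
    intro x hx
    rw [hN₁] at hx; rw [hN₂]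
    exact map_mem_closure continuous_star hx (fun y hy => hstarM₁ y hy)
  have hstarN₂ : ∀ x ∈ N₂, star x ∈ N₁ := by
    intro x hx
    rw [hN₂] at hx; rw [hN₁]
    exact map_mem_closure continuous_star hx (fun y hy => hstarM₂ y hy)
  -- basic properties of D
  have hDmul : ∀ x ∈ D, ∀ y ∈ D, x * y ∈ D :=
    fun x hx y hy => ⟨hleft x _ hy.1, hright y _ hx.2⟩
  have hCD : C ⊆ D := fun c hc =>
    ⟨subset_closure (Submodule.subset_span ⟨1, c, hc, (one_mul c).symm⟩),
     subset_closure (Submodule.subset_span ⟨1, c, hc, (mul_one c).symm⟩)⟩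
  have hDO : ∀ x ∈ D, x ∈ O := fun x hx d hd => ⟨hDmul x hx d hd, hDmul d hd x hx⟩
  have hDstar : ∀ x ∈ D, star x ∈ D := fun x hx => ⟨hstarN₂ x hx.2, hstarN₁ x hx.1⟩
  have hN₁add : ∀ x ∈ N₁, ∀ y ∈ N₁, x + y ∈ N₁ := by
    intro x hx y hy
    rw [hN₁] at hx hy ⊢
    rw [← Submodule.topologicalClosure_coe] at hx hy ⊢
    exact add_mem hx hy
  have hN₂add : ∀ x ∈ N₂, ∀ y ∈ N₂, x + y ∈ N₂ := by
    intro x hx y hy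
    rw [hN₂] at hx hy ⊢
    rw [← Submodule.topologicalClosure_coe] at hx hy ⊢
    exact add_mem hx hy
  have hDadd : ∀ x ∈ D, ∀ y ∈ D, x + y ∈ D :=
    fun x hx y hy => ⟨hN₁add x hx.1 y hy.1, hN₂add x hx.2 y hy.2⟩
  have hDsmul : ∀ (r : ℂ), ∀ x ∈ D, r • x ∈ D := by
    intro r x hx
    obtain ⟨hx1, hx2⟩ := hx
    rw [hN₁] at hx1; rw [hN₂] at hx2
    rw [← Submodule.topologicalClosure_coe] at hx1 hx2
    exact ⟨by rw [hN₁, ← Submodule.topologicalClosure_coe]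
              exact SMulMemClass.smul_mem r hx1,
           by rw [hN₂, ← Submodule.topologicalClosure_coe]
              exact SMulMemClass.smul_mem r hx2⟩
  have hD0 : (0 : F) ∈ D :=
    ⟨subset_closure M₁.zero_mem, subset_closure M₂.zero_mem⟩
  have hDclosed : IsClosed D := IsClosed.inter isClosed_closure isClosed_closure
  -- O is star-closed
  have hOstar : ∀ x ∈ O, star x ∈ O := by
    intro x hx d hd
    constructor
    · have h1 := (hx (star d) (hDstar d hd)).2
      have h2 := hDstar _ h1
      rwa [star_mul, star_star] at h2
    · have h1 := (hx (star d) (hDstar d hd)).1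
      have h2 := hDstar _ h1
      rwa [star_mul, star_star] at h2
  -- the target submodules
  set T₁ : Submodule ℂ F := Submodule.span ℂ {x : F | ∃ a ∈ O, ∃ c ∈ C, x = a * c}
    with hT₁def
  set T₂ : Submodule ℂ F := Submodule.span ℂ {x : F | ∃ a ∈ O, ∃ c ∈ C, x = c * a}
    with hT₂def
  have hstarT₁ : ∀ x ∈ T₁, star x ∈ T₂ := by
    intro x hx
    induction hx using Submodule.span_induction with
    | mem y hy =>
        obtain ⟨a, ha, c, hc, rfl⟩ := hy
        exact Submodule.subset_span ⟨star a, hOstar a ha, star c, hC c hc, by rw [star_mul]⟩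
    | zero => rw [star_zero]; exact T₂.zero_mem
    | add y z _ _ hy hz => rw [star_add]; exact add_mem hy hz
    | smul r y _ hy => rw [star_smul]; exact SMulMemClass.smul_mem _ hy
  have hstarT₂ : ∀ x ∈ T₂, star x ∈ T₁ := by
    intro x hx
    induction hx using Submodule.span_induction with
    | mem y hy =>
        obtain ⟨a, ha, c, hc, rfl⟩ := hy
        exact Submodule.subset_span ⟨star a, hOstar a ha, star c, hC c hc, by rw [star_mul]⟩
    | zero => rw [star_zero]; exact T₁.zero_mem
    | add y z _ _ hy hz => rw [star_add]; exact add_mem hy hz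
    | smul r y _ hy => rw [star_smul]; exact SMulMemClass.smul_mem _ hy
  -- the *-subalgebra generated by C sits inside D
  have hadjD : ∀ x ∈ NonUnitalStarAlgebra.adjoin ℂ C, x ∈ D := by
    intro x hx
    induction hx using NonUnitalStarAlgebra.adjoin_induction with
    | mem y hy => exact hCD hy
    | add y z _ _ hy hz => exact hDadd _ hy _ hz
    | zero => exact hD0
    | mul y z _ _ hy hz => exact hDmul _ hy _ hz
    | smul r y _ hy => exact hDsmul r _ hy
    | star y _ hy => exact hDstar _ hy
  -- key algebraic fact: D * adjoin ⊆ T₁ and adjoin * D ⊆ T₂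
  have hkey : ∀ x ∈ NonUnitalStarAlgebra.adjoin ℂ C, ∀ d ∈ D, d * x ∈ T₁ ∧ x * d ∈ T₂ := by
    intro x hx
    induction hx using NonUnitalStarAlgebra.adjoin_induction with
    | mem c hc =>
        exact fun d hd => ⟨Submodule.subset_span ⟨d, hDO d hd, c, hc, rfl⟩,
          Submodule.subset_span ⟨d, hDO d hd, c, hc, rfl⟩⟩
    | add y z hy' hz' hy hz =>
        intro d hd
        exact ⟨by rw [mul_add]; exact add_mem (hy d hd).1 (hz d hd).1,
               by rw [add_mul]; exact add_mem (hy d hd).2 (hz d hd).2⟩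
    | zero =>
        intro d hd
        exact ⟨by rw [mul_zero]; exact T₁.zero_mem, by rw [zero_mul]; exact T₂.zero_mem⟩
    | mul y z hy' hz' hy hz =>
        intro d hd
        refine ⟨?_, ?_⟩
        · rw [← mul_assoc]
          exact (hz (d * y) (hDmul d hd y (hadjD y hy'))).1
        · rw [mul_assoc]
          exact (hy (z * d) (hDmul z (hadjD z hz') d hd)).2
    | smul r y hy' hy =>
        intro d hd
        exact ⟨by rw [mul_smul_comm]; exact SMulMemClass.smul_mem r (hy d hd).1,
               by rw [smul_mul_assoc]; exact SMulMemClass.smul_mem r (hy d hd).2⟩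
    | star y hy' hy =>
        intro d hd
        constructor
        · have h1 := (hy (star d) (hDstar d hd)).2
          have h2 := hstarT₂ _ h1
          rwa [star_mul, star_star] at h2
        · have h1 := (hy (star d) (hDstar d hd)).1
          have h2 := hstarT₁ _ h1
          rwa [star_mul, star_star] at h2
  -- closure of the targets is contained in D
  have hTD₁ : closure (T₁ : Set F) ⊆ D := by
    refine closure_minimal ?_ hDclosed
    intro x hx
    induction hx using Submodule.span_induction with
    | mem y hy => obtain ⟨a, ha, c, hc, rfl⟩ := hy; exact (ha c (hCD hc)).1
    | zero => exact hD0
    | add y z _ _ hy hz => exact hDadd _ hy _ hz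
    | smul r y _ hy => exact hDsmul r _ hy
  have hTD₂ : closure (T₂ : Set F) ⊆ D := by
    refine closure_minimal ?_ hDclosed
    intro x hx
    induction hx using Submodule.span_induction with
    | mem y hy => obtain ⟨a, ha, c, hc, rfl⟩ := hy; exact (ha c (hCD hc)).2
    | zero => exact hD0
    | add y z _ _ hy hz => exact hDadd _ hy _ hz
    | smul r y _ hy => exact hDsmul r _ hy
  -- the analytic core : D ⊆ closure T₁
  have hcore : ∀ d ∈ D, d ∈ closure (T₁ : Set F) := by
    intro d hd
    have main : d ∈ closure (closure (T₁ : Set F)) := by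
      rw [Metric.mem_closure_iff]
      intro ε hε
      have hdN₁ : d ∈ closure (M₁ : Set F) := hN₁ ▸ hd.1
      rw [Metric.mem_closure_iff] at hdN₁
      obtain ⟨y, hyM, hy⟩ := hdN₁ (ε / 3) (by positivity)
      obtain ⟨m, r, g, hyrep⟩ := Submodule.mem_span_set'.mp hyM
      choose a c hc heq using fun i => (g i).2
      set K : ℝ := ∑ i, ‖r i‖ * ‖a i‖ with hKdef
      have hK0 : 0 ≤ K :=
        Finset.sum_nonneg fun i _ => mul_nonneg (norm_nonneg _) (norm_nonneg _)
      set ε' : ℝ := ε / (3 * (K + 1)) with hε'def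
      have hε'0 : 0 < ε' := by positivity
      obtain ⟨u, hu1, hu2, hu3⟩ := aux_unit c hε'0
      have humem : u ∈ closure
          ((NonUnitalStarAlgebra.adjoin ℂ C : NonUnitalStarSubalgebra ℂ F) : Set F) :=
        hu3 _ (fun i => NonUnitalStarAlgebra.subset_adjoin ℂ C (hc i))
      have hdu : d * u ∈ closure (T₁ : Set F) :=
        map_mem_closure (continuous_mul_left d) humem (fun z hz => (hkey z hz d hd).1)
      refine ⟨d * u, hdu, ?_⟩
      have est_each : ∀ i, ‖r i • (g i : F) - (r i • (g i : F)) * u‖ ≤ ‖r i‖ * ‖a i‖ * ε' := by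
        intro i
        have e1 : r i • (g i : F) - (r i • (g i : F)) * u = r i • (a i * (c i - c i * u)) := by
          rw [heq i, smul_mul_assoc, ← smul_sub, mul_sub, mul_assoc]
        rw [e1, norm_smul, mul_assoc]
        refine mul_le_mul_of_nonneg_left ?_ (norm_nonneg _)
        exact (norm_mul_le _ _).trans (mul_le_mul_of_nonneg_left (hu2 i) (norm_nonneg _))
      have est1 : ‖y - y * u‖ ≤ K * ε' := by
        rw [← hyrep, Finset.sum_mul, ← Finset.sum_sub_distrib]
        calc ‖∑ i, (r i • (g i : F) - (r i • (g i : F)) * u)‖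
            ≤ ∑ i, ‖r i • (g i : F) - (r i • (g i : F)) * u‖ := norm_sum_le _ _
          _ ≤ ∑ i, ‖r i‖ * ‖a i‖ * ε' := Finset.sum_le_sum fun i _ => est_each i
          _ = K * ε' := by rw [hKdef, Finset.sum_mul]
      have est1' : K * ε' ≤ ε / 3 := by
        have e : (K + 1) * ε' = ε / 3 := by
          rw [hε'def]
          field_simp
        calc K * ε' ≤ (K + 1) * ε' :=
              mul_le_mul_of_nonneg_right (by linarith) hε'0.le
          _ = ε / 3 := e
      have est2 : ‖(y - d) * u‖ < ε / 3 := by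
        calc ‖(y - d) * u‖ ≤ ‖y - d‖ * ‖u‖ := norm_mul_le _ _
          _ ≤ ‖y - d‖ * 1 := mul_le_mul_of_nonneg_left hu1 (norm_nonneg _)
          _ = ‖y - d‖ := mul_one _
          _ < ε / 3 := by rwa [← dist_eq_norm, dist_comm]
      have hdist : dist d (d * u) < ε := by
        have hdec : d - d * u = (d - y) + (y - y * u) + (y - d) * u := by noncomm_ring
        rw [dist_eq_norm, hdec]
        calc ‖(d - y) + (y - y * u) + (y - d) * u‖
            ≤ ‖(d - y) + (y - y * u)‖ + ‖(y - d) * u‖ := norm_add_le _ _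
          _ ≤ ‖d - y‖ + ‖y - y * u‖ + ‖(y - d) * u‖ :=
              add_le_add_left (norm_add_le _ _) _
          _ < ε := by
              have h1 : ‖d - y‖ < ε / 3 := by rwa [← dist_eq_norm]
              have h2 : ‖y - y * u‖ ≤ ε / 3 := est1.trans est1'
              linarith [est2]
      exact hdist
    rwa [closure_closure] at main
  constructor
  · exact Set.Subset.antisymm (fun d hd => hcore d hd) hTD₁
  · refine Set.Subset.antisymm ?_ hTD₂
    intro d hd
    have h1 : star d ∈ closure (T₁ : Set F) := hcore (star d) (hDstar d hd)
    have h2 := map_mem_closure continuous_star h1 (fun z hz => hstarT₁ z hz)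
    rwa [star_star] at h2
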